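/- In the group ℤ^ω (countable direct power of ℤ with pointwise order), the sequence whose i-th term is the element equal to 0 in the first i coordinates and 1 in all later coordinates is a strictly decreasing sequence of positive (nonzero, nonnegative) elements; yet every strongly decreasing sequence in ℤ^ω is trivial. -/

import Mathlib

theorem zomega_strict_but_no_strongly_decreasing :
    (∀ i : ℕ,
      0 ≤ (fun n => if n < i then (0 : ℤ) else 1) ∧
      (fun n => if n < i then (0 : ℤ) else 1) ≠ 0 ∧
      (fun n => if n < i + 1 then (0 : ℤ) else 1) <
        (fun n => if n < i then (0 : ℤ) else 1)) ∧
    (∀ x : ℕ → (ℕ → ℤ),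
      (∀ i, ∃ n : ℕ, 4 ≤ n ∧ x i ≤ n • x (i + 1) ∧ 2 • x (i + 1) ≤ x i) →
      ∀ i, x i = 0) := by
  constructor
  · intro i
    refine ⟨?_, ?_, ?_⟩
    · intro n; by_cases h : n < i <;> simp [h]
    · intro h
      have := congrFun h i
      simp at this
    · apply lt_of_le_of_ne
      · intro n
        by_cases h1 : n < i
        · simp [h1, Nat.lt_succ_of_lt h1]
        · by_cases h2 : n < i + 1 <;> simp [h1, h2]
      · intro h
        have := congrFun h i
        simp at this
  · intro x h
    -- pointwise facts
    have key : ∀ i k, x i k = 0 := by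
      have hpos : ∀ i k, 0 ≤ x (i + 1) k := by
        intro i k
        obtain ⟨n, hn4, hle, hge⟩ := h i
        have h1 : x i k ≤ (n : ℤ) * x (i + 1) k := by
          have := hle k
          simpa [nsmul_eq_mul] using this
        have h2 : (2 : ℤ) * x (i + 1) k ≤ x i k := by
          have := hge k
          simpa [nsmul_eq_mul] using this
        have hn : (4 : ℤ) ≤ (n : ℤ) := by exact_mod_cast hn4
        nlinarith
      have hzero : ∀ i k, x (i + 1) k ≤ 0 := by
        intro i k
        by_contra hc
        push_neg at hc
        -- positivity propagates and halving gives contradiction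
        have step : ∀ j, 0 < x (i + 1 + j) k ∧
            (2 : ℤ) ^ j * x (i + 1 + j) k ≤ x (i + 1) k := by
          intro j
          induction j with
          | zero => simpa using hc
          | succ j ih =>
            obtain ⟨hp, hb⟩ := ih
            obtain ⟨n, hn4, hle, hge⟩ := h (i + 1 + j)
            have h1 : x (i + 1 + j) k ≤ (n : ℤ) * x (i + 1 + j + 1) k := by
              simpa [nsmul_eq_mul] using hle k
            have h2 : (2 : ℤ) * x (i + 1 + j + 1) k ≤ x (i + 1 + j) k := by
              simpa [nsmul_eq_mul] using hge k
            have hn : (4 : ℤ) ≤ (n : ℤ) := by exact_mod_cast hn4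
            have hp' : 0 < x (i + 1 + j + 1) k := by nlinarith
            have hb' : (2 : ℤ) ^ (j + 1) * x (i + 1 + j + 1) k ≤ x (i + 1) k := by
              have h2p : (0 : ℤ) < 2 ^ j := by positivity
              calc (2 : ℤ) ^ (j + 1) * x (i + 1 + j + 1) k
                  = 2 ^ j * (2 * x (i + 1 + j + 1) k) := by ring
                _ ≤ 2 ^ j * x (i + 1 + j) k := by
                    exact mul_le_mul_of_nonneg_left h2 (le_of_lt h2p)
                _ ≤ x (i + 1) k := hb
            have heq : i + 1 + (j + 1) = i + 1 + j + 1 := by ring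
            rw [heq]
            exact ⟨hp', hb'⟩
        set a := x (i + 1) k with ha
        set j := a.toNat with hj
        obtain ⟨hp, hb⟩ := step j
        have h1 : (1 : ℤ) ≤ x (i + 1 + j) k := hp
        have h2 : (2 : ℤ) ^ j ≤ a := by nlinarith [pow_pos (show (0:ℤ) < 2 by norm_num) j]
        have h3 : a ≤ (j : ℤ) := by
          rw [hj]
          exact Int.self_le_toNat a
        have h4 : (j : ℤ) < 2 ^ j := by exact_mod_cast j.lt_two_pow_self
        linarith
      have hx1 : ∀ i k, x (i + 1) k = 0 := fun i k =>
        le_antisymm (hzero i k) (hpos i k)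
      intro i k
      cases i with
      | zero =>
        obtain ⟨n, hn4, hle, hge⟩ := h 0
        have h1 : x 0 k ≤ (n : ℤ) * x 1 k := by simpa [nsmul_eq_mul] using hle k
        have h2 : (2 : ℤ) * x 1 k ≤ x 0 k := by simpa [nsmul_eq_mul] using hge k
        have := hx1 0 k
        rw [this] at h1 h2
        simp at h1 h2
        linarith
      | succ i => exact hx1 i k
    intro i
    funext k
    exact key i k
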